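/- In any CM-Nim game with k jars, no coordinate of a P-position is larger than twice the sum of the other coordinates: if (a_1, ..., a_k) is a P-position, then for every index j we have a_j ≤ 2 · (a_1 + ... + a_k − a_j). -/
import Mathlib


/-- A move in a CM-Nim game with permissible family `𝒮`: choose a permissible
(nonempty) set `S` of jars and a positive number `c` of cookies with `c ≤ p i`
for every `i ∈ S`, and take `c` cookies from each jar in `S`. -/
def CMMove {k : ℕ} (𝒮 : Set (Finset (Fin k))) (p q : Fin k → ℕ) : Prop :=
  ∃ S ∈ 𝒮, S.Nonempty ∧ ∃ c > 0, (∀ i ∈ S, c ≤ p i ∧ q i = p i - c) ∧ ∀ i ∉ S, q i = p i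

lemma CMMove.sum_lt {k : ℕ} {𝒮 : Set (Finset (Fin k))} {p q : Fin k → ℕ}
    (h : CMMove 𝒮 p q) : ∑ i, q i < ∑ i, p i := by
  obtain ⟨S, hS, ⟨i0, hi0⟩, c, hc, h1, h2⟩ := h
  apply Finset.sum_lt_sum
  · intro i _
    by_cases hi : i ∈ S
    · have := h1 i hi; omega
    · rw [h2 i hi]
  · exact ⟨i0, Finset.mem_univ _, by have := h1 i0 hi0; omega⟩

/-- P-positions of a CM-Nim game, defined by well-founded recursion on the
total number of cookies: a position is a P-position iff every move from it
leads to a position that is not a P-position. -/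
def CMPPos {k : ℕ} (𝒮 : Set (Finset (Fin k))) (p : Fin k → ℕ) : Prop :=
  ∀ q, CMMove 𝒮 p q → ¬ CMPPos 𝒮 q
termination_by ∑ i, p i
decreasing_by exact CMMove.sum_lt (by assumption)

lemma cmppos_iff {k : ℕ} (𝒮 : Set (Finset (Fin k))) (p : Fin k → ℕ) :
    CMPPos 𝒮 p ↔ ∀ q, CMMove 𝒮 p q → ¬ CMPPos 𝒮 q := by
  rw [CMPPos]

lemma cm_aux {k : ℕ} (𝒮 : Set (Finset (Fin k)))
    (hsingle : ∀ i : Fin k, ({i} : Finset (Fin k)) ∈ 𝒮) :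
    ∀ n (a : Fin k → ℕ), ∑ i, a i ≤ n → CMPPos 𝒮 a → ∀ j : Fin k,
      a j ≤ 2 * ∑ i ∈ Finset.univ.erase j, a i := by
  intro n
  induction n with
  | zero =>
    intro a hsum _ j
    have := Finset.single_le_sum (f := a) (fun i _ => Nat.zero_le _) (Finset.mem_univ j)
    omega
  | succ n IH =>
    intro a hsum hP j
    by_contra hcon
    push_neg at hcon
    set E := Finset.univ.erase j with hE
    set T := ∑ i ∈ E, a i with hTdef
    set b := Function.update a j (2 * T) with hb
    have hbj : b j = 2 * T := Function.update_self j (2 * T) a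
    have hbne : ∀ i, i ≠ j → b i = a i := fun i hi => Function.update_of_ne hi _ _
    have hmove1 : CMMove 𝒮 a b := by
      refine ⟨{j}, hsingle j, ⟨j, Finset.mem_singleton_self j⟩, a j - 2 * T, by omega, ?_, ?_⟩
      · intro i hi
        rw [Finset.mem_singleton] at hi
        subst hi
        exact ⟨by omega, by rw [hbj]; omega⟩
      · intro i hi
        rw [Finset.mem_singleton] at hi
        exact hbne i hi
    have hbN : ¬ CMPPos 𝒮 b := (cmppos_iff 𝒮 a).mp hP b hmove1
    rw [cmppos_iff] at hbN
    push_neg at hbN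
    obtain ⟨q, hmq, hq⟩ := hbN
    obtain ⟨S, hS, hSne, c, hc, h1, h2⟩ := hmq
    have hsumb : ∑ i ∈ E, b i = T := by
      rw [hTdef]
      exact Finset.sum_congr rfl fun i hi => hbne i (Finset.mem_erase.mp hi).1
    have hbq : ∀ i ∈ E, b i = q i + (if i ∈ S then c else 0) := by
      intro i _
      by_cases hiS : i ∈ S
      · have := h1 i hiS; simp only [hiS, if_true]; omega
      · simp [hiS, h2 i hiS]
    have hsplit : T = ∑ i ∈ E, q i + c * (E ∩ S).card := by
      rw [← hsumb, Finset.sum_congr rfl hbq, Finset.sum_add_distrib,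
        Finset.sum_ite_mem, Finset.sum_const, smul_eq_mul, mul_comm]
    have hsum_q_le : ∑ i, q i ≤ n := by
      have hlt := CMMove.sum_lt ⟨S, hS, hSne, c, hc, h1, h2⟩
      have hsb : ∑ i, b i = 2 * T + T := by
        rw [← Finset.add_sum_erase _ b (Finset.mem_univ j), hbj, hsumb]
      have hsa : ∑ i, a i = a j + T := by
        rw [← Finset.add_sum_erase _ a (Finset.mem_univ j)]
      omega
    have hIH := IH q hsum_q_le hq j
    rw [← hE] at hIH
    set m := c * (E ∩ S).card with hmdef
    by_cases hjS : j ∈ S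
    · have hqj : q j + c = 2 * T := by
        have := h1 j hjS; rw [hbj] at this; omega
      by_cases hSj : S = {j}
      · refine (cmppos_iff 𝒮 a).mp hP q ?_ hq
        refine ⟨{j}, hsingle j, ⟨j, Finset.mem_singleton_self j⟩, a j - q j, by omega, ?_, ?_⟩
        · intro i hi
          rw [Finset.mem_singleton] at hi
          subst hi
          exact ⟨by omega, by omega⟩
        · intro i hi
          rw [Finset.mem_singleton] at hi
          rw [h2 i (by rw [hSj, Finset.mem_singleton]; exact hi), hbne i hi]
      · have hcard : 1 ≤ (E ∩ S).card := by
          obtain ⟨i0, hi0, hij⟩ : ∃ i0 ∈ S, i0 ≠ j := by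
            by_contra hno
            push_neg at hno
            exact hSj (Finset.eq_singleton_iff_unique_mem.mpr ⟨hjS, fun x hx => hno x hx⟩)
          exact Finset.card_pos.mpr ⟨i0, Finset.mem_inter.mpr
            ⟨Finset.mem_erase.mpr ⟨hij, Finset.mem_univ _⟩, hi0⟩⟩
        have hmge : c ≤ m := by
          rw [hmdef]; exact Nat.le_mul_of_pos_right c hcard
        omega
    · have hqj : q j = 2 * T := by rw [h2 j hjS, hbj]
      have hcard : 1 ≤ (E ∩ S).card := by
        obtain ⟨i0, hi0⟩ := hSne
        have hij : i0 ≠ j := fun he => hjS (he ▸ hi0)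
        exact Finset.card_pos.mpr ⟨i0, Finset.mem_inter.mpr
          ⟨Finset.mem_erase.mpr ⟨hij, Finset.mem_univ _⟩, hi0⟩⟩
      have hmge : c ≤ m := by
        rw [hmdef]; exact Nat.le_mul_of_pos_right c hcard
      omega

/-- Nim with `k` piles: only singletons are permissible. -/
def NimSets (k : ℕ) : Set (Finset (Fin k)) := {S | ∃ i, S = {i}}

/-- In any CM-Nim game with `k` jars (a family `𝒮` of nonempty permissible
sets containing every singleton), no coordinate of a P-position is larger than
twice the sum of the other coordinates. -/
theorem ppos_coord_le_twice_sum_others (k : ℕ) (𝒮 : Set (Finset (Fin k)))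
    (hne : ∀ S ∈ 𝒮, S.Nonempty)
    (hsingle : ∀ i : Fin k, ({i} : Finset (Fin k)) ∈ 𝒮)
    (a : Fin k → ℕ) (h : CMPPos 𝒮 a) (j : Fin k) :
    a j ≤ 2 * ∑ i ∈ Finset.univ.erase j, a i := by
  exact cm_aux 𝒮 hsingle (∑ i, a i) a le_rfl h j
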